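/- Let μ > 0, β' > 0 non-increasing, γ non-decreasing. If u, v : [0,T] → ℝ are C¹, u' ≥ 0, u ≤ v on [0,T], and μ(γ(u'(t)) - γ(v'(t))) + β'(u(t))u'(t) - β'(v(t))v'(t) ≤ γ(u(t)) - γ(v(t)) ≤ 0 for all t, then u'(t) ≤ v'(t) for all t ∈ [0,T]. -/
import Mathlib

/-- Key step of the ODE comparison lemma: the differential inequality implies
`u' ≤ v'` on `[0,T]`. -/
theorem stmt_7 (γ β' : ℝ → ℝ) (μ T : ℝ) (hT : 0 < T) (hμ : 0 < μ)
    (hβ'pos : ∀ s : ℝ, 0 < β' s) (hβ'anti : Antitone β') (hγmono : Monotone γ)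
    (u v u' v' : ℝ → ℝ)
    (hu : ∀ t ∈ Set.Icc (0:ℝ) T, HasDerivAt u (u' t) t)
    (hv : ∀ t ∈ Set.Icc (0:ℝ) T, HasDerivAt v (v' t) t)
    (hu'nn : ∀ t ∈ Set.Icc (0:ℝ) T, 0 ≤ u' t)
    (hle : ∀ t ∈ Set.Icc (0:ℝ) T, u t ≤ v t)
    (hineq : ∀ t ∈ Set.Icc (0:ℝ) T,
      μ * (γ (u' t) - γ (v' t)) + β' (u t) * u' t - β' (v t) * v' t
        ≤ γ (u t) - γ (v t) ∧ γ (u t) - γ (v t) ≤ 0) :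
    ∀ t ∈ Set.Icc (0:ℝ) T, u' t ≤ v' t := by
  intro t ht
  by_contra h
  push_neg at h
  have h1 : γ (v' t) ≤ γ (u' t) := hγmono h.le
  have h2 : β' (v t) ≤ β' (u t) := hβ'anti (hle t ht)
  have h3 := (hineq t ht).1
  have h4 := (hineq t ht).2
  have h5 := hβ'pos (v t)
  have h6 := hu'nn t ht
  nlinarith [mul_pos h5 (sub_pos.mpr h)]
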